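/- (Basic Perturbation Lemma, part 1.) Under the perturbation setup, the perturbed differential on M squares to zero: (d_M + d_δ) ∘ (d_M + d_δ) = 0, where d_δ = f ∘ δ ∘ Σ ∘ g. -/

import Mathlib

open LinearMap

lemma bpl_core {A : Type*} [Ring A] (d e φ : A)
    (h2 : d * e + e * d + e * e = 0) (n : ℕ) (hx : (φ * e) ^ n = 0) :
    d * (e * ∑ i ∈ Finset.range n, (-(φ * e)) ^ i)
      + (e * ∑ i ∈ Finset.range n, (-(φ * e)) ^ i) * d
      + (e * ∑ i ∈ Finset.range n, (-(φ * e)) ^ i) * (1 - φ * d - d * φ)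
        * (e * ∑ i ∈ Finset.range n, (-(φ * e)) ^ i) = 0 := by
  set S : A := ∑ i ∈ Finset.range n, (-(φ * e)) ^ i with hSdef
  set S' : A := ∑ i ∈ Finset.range (n + 1), (-(e * φ)) ^ i with hS'def
  have hsce : SemiconjBy e (-(φ * e)) (-(e * φ)) :=
    SemiconjBy.neg_right (mul_assoc e φ e).symm
  have hscφ : SemiconjBy φ (-(e * φ)) (-(φ * e)) :=
    SemiconjBy.neg_right (mul_assoc φ e φ).symm
  have hxn : (-(φ * e)) ^ n = 0 := by rw [neg_pow, hx, mul_zero]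
  have hyn : (-(e * φ)) ^ (n + 1) = 0 := by
    have h3 : (-(e * φ)) ^ n * e = e * (-(φ * e)) ^ n := (hsce.pow_right n).symm
    calc (-(e * φ)) ^ (n + 1) = ((-(e * φ)) ^ n * e) * (-φ) := by
          rw [pow_succ]; noncomm_ring
      _ = (e * (-(φ * e)) ^ n) * (-φ) := by rw [h3]
      _ = 0 := by rw [hxn, mul_zero, zero_mul]
  have hA : e * S = S' * e := by
    rw [hSdef, hS'def, Finset.mul_sum, Finset.sum_mul, Finset.sum_range_succ]
    have hlast : (-(e * φ)) ^ n * e = e * (-(φ * e)) ^ n := (hsce.pow_right n).symm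
    rw [hlast, hxn, mul_zero, add_zero]
    exact Finset.sum_congr rfl fun i _ => ((hsce.pow_right i).eq)
  have hB : S * φ = φ * S' := by
    rw [hSdef, hS'def, Finset.sum_mul, Finset.mul_sum, Finset.sum_range_succ]
    have hlast : φ * (-(e * φ)) ^ n = (-(φ * e)) ^ n * φ := (hscφ.pow_right n).eq
    rw [hlast, hxn, zero_mul, add_zero]
    exact Finset.sum_congr rfl fun i _ => ((hscφ.pow_right i).eq).symm
  have hC : (φ * e) * S = 1 - S := by
    have := mul_geom_sum (-(φ * e)) n
    rw [← hSdef, hxn] at this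
    linear_combination (norm := noncomm_ring) -this
  have hD : (e * φ) * S' = 1 - S' := by
    have := mul_geom_sum (-(e * φ)) (n + 1)
    rw [← hS'def, hyn] at this
    linear_combination (norm := noncomm_ring) -this
  linear_combination (norm := noncomm_ring)
    S' * h2 * S + hA * ((e + d) * S) - e * hB * (d * (e * S))
      - hD * (d * (e * S)) - (e * S * d) * hC

theorem bpl_perturbed_differential_sq_zero
    (R : Type*) [CommRing R] (N M : Type*)
    [AddCommGroup N] [Module R N] [AddCommGroup M] [Module R M]
    (dN : N →ₗ[R] N) (dM : M →ₗ[R] M)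
    (hdN : dN ∘ₗ dN = 0) (hdM : dM ∘ₗ dM = 0)
    (f : N →ₗ[R] M) (g : M →ₗ[R] N) (φ : N →ₗ[R] N)
    (hf : f ∘ₗ dN = dM ∘ₗ f) (hg : g ∘ₗ dM = dN ∘ₗ g)
    (hfg : f ∘ₗ g = LinearMap.id)
    (hhom : φ ∘ₗ dN + dN ∘ₗ φ + g ∘ₗ f = LinearMap.id)
    (hfφ : f ∘ₗ φ = 0) (hφg : φ ∘ₗ g = 0) (hφφ : φ ∘ₗ φ = 0)
    (δ : N →ₗ[R] N) (hδ : (dN + δ) ∘ₗ (dN + δ) = 0)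
    (n : ℕ) (hnil : (φ ∘ₗ δ) ^ n = 0) :
    (dM + f ∘ₗ δ ∘ₗ (∑ i ∈ Finset.range n, ((-1 : R) ^ i • (φ ∘ₗ δ) ^ i)) ∘ₗ g) ∘ₗ
      (dM + f ∘ₗ δ ∘ₗ (∑ i ∈ Finset.range n, ((-1 : R) ^ i • (φ ∘ₗ δ) ^ i)) ∘ₗ g) = 0 := by
  -- rewrite the sum as a genuine geometric sum
  have hsum : (∑ i ∈ Finset.range n, ((-1 : R) ^ i • (φ ∘ₗ δ) ^ i))
      = ∑ i ∈ Finset.range n, (-(φ ∘ₗ δ)) ^ i := by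
    refine Finset.sum_congr rfl fun i _ => ?_
    rw [← neg_one_smul R (φ ∘ₗ δ), smul_pow]
  rw [hsum]
  set S : N →ₗ[R] N := ∑ i ∈ Finset.range n, (-(φ ∘ₗ δ)) ^ i with hSdef
  -- the perturbation identity on N
  have h2 : dN ∘ₗ δ + δ ∘ₗ dN + δ ∘ₗ δ = 0 := by
    have : dN ∘ₗ dN + (dN ∘ₗ δ + δ ∘ₗ dN + δ ∘ₗ δ) = 0 := by
      rw [← hδ]; simp only [comp_add, add_comp]; abel
    rw [hdN, zero_add] at this
    exact this
  -- core identity, in the endomorphism ring of N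
  have key : dN ∘ₗ (δ ∘ₗ S) + (δ ∘ₗ S) ∘ₗ dN
      + ((δ ∘ₗ S) ∘ₗ (LinearMap.id - φ ∘ₗ dN - dN ∘ₗ φ)) ∘ₗ (δ ∘ₗ S) = 0 := by
    have h2' : dN * δ + δ * dN + δ * δ = 0 := by
      simpa only [Module.End.mul_eq_comp] using h2
    have hx : (φ * δ) ^ n = 0 := by simpa only [Module.End.mul_eq_comp] using hnil
    have := bpl_core dN δ φ h2' n hx
    simpa only [Module.End.mul_eq_comp, Module.End.one_eq_id, hSdef] using this
  -- pointwise facts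
  have pdM : ∀ x : M, dM (dM x) = 0 := fun x => by
    have := LinearMap.congr_fun hdM x; simpa using this
  have pf : ∀ x : N, dM (f x) = f (dN x) := fun x =>
    (LinearMap.congr_fun hf x).symm
  have pg : ∀ x : M, g (dM x) = dN (g x) := fun x =>
    LinearMap.congr_fun hg x
  have pgf : ∀ x : N, g (f x) = x - φ (dN x) - dN (φ x) := fun x => by
    have := LinearMap.congr_fun hhom x
    simp only [LinearMap.add_apply, comp_apply, id_apply] at this
    linear_combination (norm := abel) this
  have pkey : ∀ x : N,
      dN (δ (S x)) + δ (S (dN x))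
        + δ (S (δ (S x) - φ (dN (δ (S x))) - dN (φ (δ (S x))))) = 0 := fun x => by
    have := LinearMap.congr_fun key x
    simpa using this
  ext m
  simp only [comp_apply, LinearMap.add_apply, LinearMap.zero_apply, pdM, pf, pg, pgf, map_sub, map_add]
  have := pkey (g m)
  have happ : f (dN (δ (S (g m))) + δ (S (dN (g m)))
      + δ (S (δ (S (g m)) - φ (dN (δ (S (g m)))) - dN (φ (δ (S (g m))))))) = 0 := by
    rw [this, map_zero]
  simp only [map_add, map_sub] at happ
  linear_combination (norm := abel) happ
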